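/- If in a configuration K' of a 3-RPR manipulator one leg degenerates to a point (k'_j = k'_{j+3} for some j ∈ {1,2,3}) and the carrier lines of the remaining two legs pass through that point, then K' is a singular point of the singularity variety V = 0: V and all its first partial derivatives vanish at K'. -/

import Mathlib

/-- The 2×2 determinant of the matrix with columns `a`, `b`. -/
def det2 (a b : Fin 2 → ℝ) : ℝ := a 0 * b 1 - a 1 * b 0

/-- The matrix `V(K')` whose columns are the Plücker coordinates of the three legs. -/
def Vmat (K : Fin 6 → Fin 2 → ℝ) : Matrix (Fin 3) (Fin 3) ℝ :=
  Matrix.of fun r c =>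
    let i : Fin 6 := Fin.castLE (by norm_num) c
    let j : Fin 6 := c.addNat 3
    if r = 0 then (K j - K i) 0
    else if r = 1 then (K j - K i) 1
    else det2 (K i) (K j - K i)

/-- The singularity polynomial `V` as a function of the configuration. -/
def Vdet (K : Fin 6 → Fin 2 → ℝ) : ℝ := (Vmat K).det

lemma Vdet_eq (K : Fin 6 → Fin 2 → ℝ) : Vdet K =
    (K 3 0 - K 0 0) * ((K 4 1 - K 1 1) * (K 2 0 * (K 5 1 - K 2 1) - K 2 1 * (K 5 0 - K 2 0))
      - (K 5 1 - K 2 1) * (K 1 0 * (K 4 1 - K 1 1) - K 1 1 * (K 4 0 - K 1 0)))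
    - (K 4 0 - K 1 0) * ((K 3 1 - K 0 1) * (K 2 0 * (K 5 1 - K 2 1) - K 2 1 * (K 5 0 - K 2 0))
      - (K 5 1 - K 2 1) * (K 0 0 * (K 3 1 - K 0 1) - K 0 1 * (K 3 0 - K 0 0)))
    + (K 5 0 - K 2 0) * ((K 3 1 - K 0 1) * (K 1 0 * (K 4 1 - K 1 1) - K 1 1 * (K 4 0 - K 1 0))
      - (K 4 1 - K 1 1) * (K 0 0 * (K 3 1 - K 0 1) - K 0 1 * (K 3 0 - K 0 0))) := by
  show (Vmat K).det = _
  rw [Matrix.det_fin_three]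
  simp only [Vmat, Matrix.of_apply, det2,
    show Fin.addNat (0:Fin 3) 3 = (3:Fin 6) from rfl,
    show Fin.addNat (1:Fin 3) 3 = (4:Fin 6) from rfl,
    show Fin.addNat (2:Fin 3) 3 = (5:Fin 6) from rfl,
    show ∀ h : (3:ℕ) ≤ 6, Fin.castLE h (0:Fin 3) = (0:Fin 6) from fun _ => rfl,
    show ∀ h : (3:ℕ) ≤ 6, Fin.castLE h (1:Fin 3) = (1:Fin 6) from fun _ => rfl,
    show ∀ h : (3:ℕ) ≤ 6, Fin.castLE h (2:Fin 3) = (2:Fin 6) from fun _ => rfl,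
    show ((0:Fin 3) = 0) = True from by simp, show ((1:Fin 3) = 0) = False from by simp,
    show ((1:Fin 3) = 1) = True from by simp, show ((2:Fin 3) = 0) = False from by simp,
    show ((2:Fin 3) = 1) = False from by simp, if_true, if_false, Pi.sub_apply]
  ring

lemma Vdet_differentiable : Differentiable ℝ Vdet := by
  have : Vdet = fun K : Fin 6 → Fin 2 → ℝ =>
    (K 3 0 - K 0 0) * ((K 4 1 - K 1 1) * (K 2 0 * (K 5 1 - K 2 1) - K 2 1 * (K 5 0 - K 2 0))
      - (K 5 1 - K 2 1) * (K 1 0 * (K 4 1 - K 1 1) - K 1 1 * (K 4 0 - K 1 0)))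
    - (K 4 0 - K 1 0) * ((K 3 1 - K 0 1) * (K 2 0 * (K 5 1 - K 2 1) - K 2 1 * (K 5 0 - K 2 0))
      - (K 5 1 - K 2 1) * (K 0 0 * (K 3 1 - K 0 1) - K 0 1 * (K 3 0 - K 0 0)))
    + (K 5 0 - K 2 0) * ((K 3 1 - K 0 1) * (K 1 0 * (K 4 1 - K 1 1) - K 1 1 * (K 4 0 - K 1 0))
      - (K 4 1 - K 1 1) * (K 0 0 * (K 3 1 - K 0 1) - K 0 1 * (K 3 0 - K 0 0))) :=
    funext Vdet_eq
  rw [this]; fun_prop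

/-- If one leg degenerates to a point and the carrier lines of the remaining two legs pass
through that point, then the configuration is a singular point of `V = 0`. -/
theorem degenerate_leg_concurrent_singular_point (K : Fin 6 → Fin 2 → ℝ)
    (h : ∃ j : Fin 3, K (Fin.castLE (by norm_num) j) = K (j.addNat 3) ∧
      ∀ i : Fin 3, i ≠ j →
        det2 (K (Fin.castLE (by norm_num) j) - K (Fin.castLE (by norm_num) i))
          (K (i.addNat 3) - K (Fin.castLE (by norm_num) i)) = 0) :
    Vdet K = 0 ∧ fderiv ℝ Vdet K = 0 := by
  obtain ⟨j, hp, hln⟩ := h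
  constructor
  · rw [Vdet_eq]
    fin_cases j
    · have e0 : K 3 0 = K 0 0 := (congrFun hp 0).symm ▸ rfl
      have e1 : K 3 1 = K 0 1 := (congrFun hp 1).symm ▸ rfl
      rw [e0, e1]; ring
    · have e0 : K 4 0 = K 1 0 := (congrFun hp 0).symm ▸ rfl
      have e1 : K 4 1 = K 1 1 := (congrFun hp 1).symm ▸ rfl
      rw [e0, e1]; ring
    · have e0 : K 5 0 = K 2 0 := (congrFun hp 0).symm ▸ rfl
      have e1 : K 5 1 = K 2 1 := (congrFun hp 1).symm ▸ rfl
      rw [e0, e1]; ring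
  · ext y
    rw [ContinuousLinearMap.zero_apply]
    -- coordinate derivative facts
    have hf : ∀ (i : Fin 6) (c : Fin 2), HasDerivAt (fun t : ℝ => K i c + t * y i c) (y i c) 0 :=
      fun i c => by simpa using ((hasDerivAt_id (0:ℝ)).mul_const (y i c)).const_add (K i c)
    have hu0 := (hf 3 0).sub (hf 0 0)
    have hu1 := (hf 4 0).sub (hf 1 0)
    have hu2 := (hf 5 0).sub (hf 2 0)
    have hv0 := (hf 3 1).sub (hf 0 1)
    have hv1 := (hf 4 1).sub (hf 1 1)
    have hv2 := (hf 5 1).sub (hf 2 1)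
    have hw0 := ((hf 0 0).mul hv0).sub ((hf 0 1).mul hu0)
    have hw1 := ((hf 1 0).mul hv1).sub ((hf 1 1).mul hu1)
    have hw2 := ((hf 2 0).mul hv2).sub ((hf 2 1).mul hu2)
    have hD := ((hu0.mul ((hv1.mul hw2).sub (hv2.mul hw1))).sub
        (hu1.mul ((hv0.mul hw2).sub (hv2.mul hw0)))).add
        (hu2.mul ((hv0.mul hw1).sub (hv1.mul hw0)))
    have hG := hD.congr_of_eventuallyEq
      (f₁ := fun t : ℝ => Vdet (K + t • y))
      (Filter.Eventually.of_forall fun t => by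
        simp only [Vdet_eq, Pi.add_apply, Pi.smul_apply, smul_eq_mul, Pi.sub_apply, Pi.mul_apply]
        try ring)
    have hL : HasDerivAt (fun t : ℝ => K + t • y) y 0 := by
      simpa using ((hasDerivAt_id (0:ℝ)).smul_const y).const_add K
    have hK0 : K + (0:ℝ) • y = K := by simp
    have hcomp : HasDerivAt (fun t : ℝ => Vdet (K + t • y)) (fderiv ℝ Vdet K y) 0 := by
      have := ((Vdet_differentiable (K + (0:ℝ) • y)).hasFDerivAt).comp_hasDerivAt 0 hL
      rwa [hK0] at this
    rw [hcomp.unique hG]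
    simp only [Pi.sub_apply, Pi.mul_apply, Pi.add_apply]
    fin_cases j
    · have e0 : K 3 0 = K 0 0 := (congrFun hp 0).symm ▸ rfl
      have e1 : K 3 1 = K 0 1 := (congrFun hp 1).symm ▸ rfl
      have h1 : (K 0 0 - K 1 0) * (K 4 1 - K 1 1) - (K 0 1 - K 1 1) * (K 4 0 - K 1 0) = 0 := by
        have := hln 1 (by decide)
        simpa [det2] using this
      have h2 : (K 0 0 - K 2 0) * (K 5 1 - K 2 1) - (K 0 1 - K 2 1) * (K 5 0 - K 2 0) = 0 := by
        have := hln 2 (by decide)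
        simpa [det2] using this
      rw [e0, e1]
      linear_combination ((y 3 0 - y 0 0) * (K 5 1 - K 2 1) - (y 3 1 - y 0 1) * (K 5 0 - K 2 0)) * h1
        + ((y 3 1 - y 0 1) * (K 4 0 - K 1 0) - (y 3 0 - y 0 0) * (K 4 1 - K 1 1)) * h2
    · have e0 : K 4 0 = K 1 0 := (congrFun hp 0).symm ▸ rfl
      have e1 : K 4 1 = K 1 1 := (congrFun hp 1).symm ▸ rfl
      have h1 : (K 1 0 - K 0 0) * (K 3 1 - K 0 1) - (K 1 1 - K 0 1) * (K 3 0 - K 0 0) = 0 := by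
        have := hln 0 (by decide)
        simpa [det2] using this
      have h2 : (K 1 0 - K 2 0) * (K 5 1 - K 2 1) - (K 1 1 - K 2 1) * (K 5 0 - K 2 0) = 0 := by
        have := hln 2 (by decide)
        simpa [det2] using this
      rw [e0, e1]
      linear_combination (-((y 4 0 - y 1 0) * (K 5 1 - K 2 1) - (y 4 1 - y 1 1) * (K 5 0 - K 2 0))) * h1
        + (-((y 4 1 - y 1 1) * (K 3 0 - K 0 0) - (y 4 0 - y 1 0) * (K 3 1 - K 0 1))) * h2
    · have e0 : K 5 0 = K 2 0 := (congrFun hp 0).symm ▸ rfl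
      have e1 : K 5 1 = K 2 1 := (congrFun hp 1).symm ▸ rfl
      have h1 : (K 2 0 - K 0 0) * (K 3 1 - K 0 1) - (K 2 1 - K 0 1) * (K 3 0 - K 0 0) = 0 := by
        have := hln 0 (by decide)
        simpa [det2] using this
      have h2 : (K 2 0 - K 1 0) * (K 4 1 - K 1 1) - (K 2 1 - K 1 1) * (K 4 0 - K 1 0) = 0 := by
        have := hln 1 (by decide)
        simpa [det2] using this
      rw [e0, e1]
      linear_combination ((y 5 0 - y 2 0) * (K 4 1 - K 1 1) - (y 5 1 - y 2 1) * (K 4 0 - K 1 0)) * h1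
        + ((y 5 1 - y 2 1) * (K 3 0 - K 0 0) - (y 5 0 - y 2 0) * (K 3 1 - K 0 1)) * h2
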